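/- arXiv:1004.0395 — 5 statements merged into one kernel-verified Lean document; each statement's English description precedes it below -/
import Mathlib

section
/- Fix an integer B ≥ 1. For every n ≥ 1: p_n(0;μ) = (B+1)^{−n}, and for every 1 ≤ v ≤ B, p_n(v;μ) = p_n(v−1;μ) + p_{n−1}(v;μ)/(B−v+1), with base case p_0(0;μ) = 1 and p_0(v;μ) = 0 for v ≠ 0. -/
open Finset


/-- Single-peer block-ownership distribution in the `γ = μ` model: each subset `s`
of `{1, …, B}` has probability `1/((B+1) C(B,|s|))` (a uniform size in `{0, …, B}`,
then a uniform subset of that size). -/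
noncomputable def wnu (B : ℕ) (s : Finset (Fin B)) : ℝ :=
  1 / ((B + 1) * (B.choose s.card))

/-- `pnu B n v` : probability that exactly `v` blocks are collectively held by `n`
independent peers, each with block set drawn from `wnu B`. -/
noncomputable def pnu (B n v : ℕ) : ℝ :=
  ∑ f : Fin n → Finset (Fin B),
    if (Finset.univ.biUnion f).card = v then ∏ u, wnu B (f u) else 0

lemma cast_pos_aux (B v : ℕ) (hv : v ≤ B) : (0:ℝ) < (B:ℝ) + 1 - v := by
  have : (v:ℝ) ≤ B := Nat.cast_le.2 hv
  linarith

lemma sum_choose_nat (B v : ℕ) (hv : v ≤ B) :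
    ∑ k ∈ range (v+1), (B-k).choose (v-k) = (B+1).choose v := by
  have h1 : ∀ k ∈ range (v+1),
      (B-k).choose (v-k) = (fun j => (B-v+j).choose (B-v)) (v+1-1-k) := by
    intro k hk
    have hk' : k ≤ v := Nat.lt_succ_iff.1 (mem_range.1 hk)
    simp only
    have e : B - v + (v+1-1-k) = B - k := by omega
    rw [e]
    have := Nat.choose_symm (show v - k ≤ B - k by omega)
    have e2 : B - k - (v - k) = B - v := by omega
    rw [e2] at this
    exact this.symm
  rw [Finset.sum_congr rfl h1,
    Finset.sum_range_reflect (fun j => (B-v+j).choose (B-v)) (v+1)]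
  have h2 : ∀ j ∈ range (v+1), (B-v+j).choose (B-v) = (j + (B-v)).choose (B-v) := by
    intro j _; rw [Nat.add_comm]
  rw [Finset.sum_congr rfl h2, Nat.sum_range_add_choose v (B-v)]
  have e3 : v + (B-v) + 1 = B + 1 := by omega
  rw [e3, ← Nat.choose_symm (show B - v + 1 ≤ B + 1 by omega)]
  congr 1
  omega

lemma sum_choose_div_choose (B v : ℕ) (hv : v ≤ B) :
    ∑ k ∈ range (v+1), (v.choose k : ℝ) / ((B:ℝ)+1) / (B.choose k) = 1 / ((B:ℝ)+1-v) := by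
  have hBv : (0:ℝ) < (B:ℝ)+1-v := cast_pos_aux B v hv
  have hc2 : (B.choose v : ℝ) ≠ 0 := by
    have := Nat.choose_pos hv; positivity
  have hB1 : ((B:ℝ)+1) ≠ 0 := by positivity
  have key : ∀ k ∈ range (v+1),
      (v.choose k : ℝ) / ((B:ℝ)+1) / (B.choose k)
        = ((B-k).choose (v-k) : ℝ) / (((B:ℝ)+1) * (B.choose v)) := by
    intro k hk
    have hk' : k ≤ v := Nat.lt_succ_iff.1 (mem_range.1 hk)
    have h2 : (B.choose v : ℝ) * v.choose k = (B.choose k : ℝ) * (B-k).choose (v-k) := by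
      exact_mod_cast congrArg (Nat.cast (R := ℝ)) (Nat.choose_mul (n := B) hk')
    have hc1 : (B.choose k : ℝ) ≠ 0 := by
      have := Nat.choose_pos (hk'.trans hv); positivity
    field_simp
    linear_combination h2
  rw [Finset.sum_congr rfl key, ← Finset.sum_div]
  have hsum : ∑ k ∈ range (v+1), ((B-k).choose (v-k) : ℝ) = ((B+1).choose v : ℝ) := by
    rw [← Nat.cast_sum]
    exact_mod_cast congrArg (Nat.cast (R := ℝ)) (sum_choose_nat B v hv)
  rw [hsum]
  have hkey : ((B+1).choose v : ℝ) * ((B:ℝ)+1-v) = ((B:ℝ)+1) * (B.choose v) := by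
    have h' : (B.choose v : ℝ) * ((B:ℝ)+1) = ((B+1).choose v : ℝ) * ((B+1-v : ℕ) : ℝ) := by
      exact_mod_cast congrArg (Nat.cast (R := ℝ)) (Nat.choose_mul_succ_eq B v)
    rw [Nat.cast_sub (by omega)] at h'
    push_cast at h' ⊢
    linarith
  field_simp
  linear_combination hkey

lemma sum_powerset_wnu (B : ℕ) (T : Finset (Fin B)) :
    ∑ s ∈ T.powerset, wnu B s = 1 / ((B:ℝ) + 1 - T.card) := by
  have hT : T.card ≤ B := by
    simpa using Finset.card_le_card (Finset.subset_univ T)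
  simp only [wnu]
  rw [Finset.sum_powerset_apply_card (fun m => 1 / (((B:ℝ) + 1) * (B.choose m)))]
  rw [← sum_choose_div_choose B T.card hT]
  refine Finset.sum_congr rfl fun k _ => ?_
  rw [nsmul_eq_mul, mul_one_div, ← div_div]
lemma card_supersets (B v : ℕ) (W : Finset (Fin B)) (hW : W.card ≤ v) :
    ((univ.powersetCard v).filter (fun T => W ⊆ T)).card
      = (B - W.card).choose (v - W.card) := by
  have : ((univ.powersetCard v).filter (fun T => W ⊆ T)).card
      = ((univ \ W).powersetCard (v - W.card)).card := by
    apply Finset.card_bij (fun T _ => T \ W)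
    · intro T hT
      simp only [mem_filter, mem_powersetCard] at hT
      obtain ⟨⟨_, hcard⟩, hsub⟩ := hT
      rw [mem_powersetCard]
      exact ⟨sdiff_subset_sdiff (subset_univ T) le_rfl,
        by rw [card_sdiff_of_subset hsub, hcard]⟩
    · intro T1 h1 T2 h2 h
      simp only [mem_filter, mem_powersetCard] at h1 h2
      have e1 : T1 = (T1 \ W) ∪ W := by
        rw [sdiff_union_self_eq_union, union_eq_left.2 h1.2]
      have e2 : T2 = (T2 \ W) ∪ W := by
        rw [sdiff_union_self_eq_union, union_eq_left.2 h2.2]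
      rw [e1, e2, h]
    · intro U hU
      rw [mem_powersetCard] at hU
      obtain ⟨hU1, hU2⟩ := hU
      have hdisj : Disjoint U W :=
        disjoint_left.2 fun x hx hxW => (mem_sdiff.1 (hU1 hx)).2 hxW
      refine ⟨U ∪ W, ?_, ?_⟩
      · simp only [mem_filter, mem_powersetCard]
        refine ⟨⟨subset_univ _, ?_⟩, subset_union_right⟩
        rw [card_union_of_disjoint hdisj, hU2]
        omega
      · rw [union_sdiff_right, sdiff_eq_self_of_disjoint hdisj]
  rw [this, card_powersetCard, card_sdiff_of_subset (subset_univ W)]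
  congr 1
  simp

lemma star (B n v : ℕ) (hv : v ≤ B) :
    ∑ w ∈ range (v+1), ((B-w).choose (v-w) : ℝ) * pnu B n w
      = (B.choose v : ℝ) / ((B:ℝ)+1-v)^n := by
  classical
  -- Step 1: RHS as double sum
  have hR : (B.choose v : ℝ) / ((B:ℝ)+1-v)^n
      = ∑ T ∈ univ.powersetCard v, ∑ f : Fin n → Finset (Fin B),
          (if univ.biUnion f ⊆ T then ∏ u, wnu B (f u) else 0) := by
    have hterm : ∀ T ∈ univ.powersetCard v,
        (∑ f : Fin n → Finset (Fin B),
          (if univ.biUnion f ⊆ T then ∏ u, wnu B (f u) else 0))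
          = (1 / ((B:ℝ)+1-v))^n := by
      intro T hT
      have hTc : T.card = v := (mem_powersetCard.1 hT).2
      have hcond : ∀ f : Fin n → Finset (Fin B),
          (univ.biUnion f ⊆ T) ↔ f ∈ Fintype.piFinset (fun _ : Fin n => T.powerset) := by
        intro f
        rw [Fintype.mem_piFinset]
        constructor
        · intro h u
          rw [mem_powerset]
          exact (subset_biUnion_of_mem f (mem_univ u)).trans h
        · intro h
          exact biUnion_subset.2 fun u _ => mem_powerset.1 (h u)
      rw [Finset.sum_congr rfl (fun f _ => if_congr (hcond f) rfl rfl)]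
      rw [Finset.sum_ite_mem, Finset.univ_inter, Finset.sum_prod_piFinset]
      rw [Finset.prod_congr rfl (fun u _ => sum_powerset_wnu B T), Finset.prod_const,
        Finset.card_univ, Fintype.card_fin, hTc]
    rw [Finset.sum_congr rfl hterm, Finset.sum_const, Finset.card_powersetCard,
      Finset.card_univ, Fintype.card_fin, nsmul_eq_mul, div_pow, one_pow]
    ring
  rw [hR, Finset.sum_comm]
  -- Step 2: inner sum over T counted
  have hinner : ∀ f : Fin n → Finset (Fin B),
      ∑ T ∈ univ.powersetCard v, (if univ.biUnion f ⊆ T then ∏ u, wnu B (f u) else 0)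
        = (if (univ.biUnion f).card ≤ v
            then ((B - (univ.biUnion f).card).choose (v - (univ.biUnion f).card) : ℝ) else 0)
          * ∏ u, wnu B (f u) := by
    intro f
    rw [← Finset.sum_filter, Finset.sum_const, nsmul_eq_mul]
    by_cases hc : (univ.biUnion f).card ≤ v
    · rw [if_pos hc, card_supersets B v _ hc]
    · rw [if_neg hc]
      have hemp : (univ.powersetCard v).filter (fun T => univ.biUnion f ⊆ T) = ∅ := by
        rw [Finset.filter_eq_empty_iff]
        intro T hT hsub
        exact hc ((Finset.card_le_card hsub).trans_eq (mem_powersetCard.1 hT).2)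
      rw [hemp, Finset.card_empty, Nat.cast_zero]
  rw [Finset.sum_congr rfl (fun f _ => hinner f)]
  -- Step 3: LHS regrouping
  have hL : ∀ f : Fin n → Finset (Fin B),
      (if (univ.biUnion f).card ≤ v
          then ((B - (univ.biUnion f).card).choose (v - (univ.biUnion f).card) : ℝ) else 0)
        * ∏ u, wnu B (f u)
      = ∑ w ∈ range (v+1), ((B-w).choose (v-w) : ℝ) *
          (if (univ.biUnion f).card = w then ∏ u, wnu B (f u) else 0) := by
    intro f
    have : ∀ w ∈ range (v+1), ((B-w).choose (v-w) : ℝ) *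
        (if (univ.biUnion f).card = w then ∏ u, wnu B (f u) else 0)
        = (if (univ.biUnion f).card = w
            then ((B-w).choose (v-w) : ℝ) * ∏ u, wnu B (f u) else 0) := by
      intro w _
      rw [mul_ite, mul_zero]
    rw [Finset.sum_congr rfl this, Finset.sum_ite_eq (range (v+1)) ((univ.biUnion f).card)
      (fun w => ((B-w).choose (v-w) : ℝ) * ∏ u, wnu B (f u))]
    by_cases hc : (univ.biUnion f).card ≤ v
    · rw [if_pos hc, if_pos (mem_range.2 (Nat.lt_succ_of_le hc))]
    · rw [if_neg hc, if_neg (fun h => hc (Nat.lt_succ_iff.1 (mem_range.1 h))), zero_mul]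
  rw [Finset.sum_congr rfl (fun f _ => hL f), Finset.sum_comm]
  simp only [pnu, Finset.mul_sum]
noncomputable def phi (B n v : ℕ) : ℝ :=
  (B.choose v : ℝ) * ∑ w ∈ range (v+1), (-1:ℝ)^(v-w) * (v.choose w) / ((B:ℝ)+1-w)^n
lemma collapse (B v u : ℕ) (hu : u ≤ v) (hv : v ≤ B) :
    ∑ w ∈ range (v+1), (-1:ℝ)^(w-u) * ((B-w).choose (v-w)) * (B.choose w) * (w.choose u)
      = if u = v then (B.choose v : ℝ) else 0 := by
  have hsplit : range (v+1) = Finset.Ico 0 u ∪ Finset.Ico u (v+1) := by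
    rw [Finset.Ico_union_Ico_eq_Ico (Nat.zero_le u) (by omega), Finset.range_eq_Ico]
  rw [hsplit, Finset.sum_union (by
    apply Finset.Ico_disjoint_Ico_consecutive)]
  have h0 : ∑ w ∈ Finset.Ico 0 u, (-1:ℝ)^(w-u) * ((B-w).choose (v-w)) * (B.choose w) * (w.choose u) = 0 := by
    apply Finset.sum_eq_zero
    intro w hw
    have : w < u := (Finset.mem_Ico.1 hw).2
    rw [Nat.choose_eq_zero_of_lt this]
    simp
  rw [h0, zero_add, Finset.sum_Ico_eq_sum_range]
  have hrw : ∀ m ∈ range (v+1-u),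
      (-1:ℝ)^(u+m-u) * ((B-(u+m)).choose (v-(u+m))) * (B.choose (u+m)) * ((u+m).choose u)
        = ((B.choose u : ℝ) * ((B-u).choose (v-u))) * ((-1:ℝ)^m * ((v-u).choose m)) := by
    intro m hm
    have hm' : m ≤ v - u := by have := mem_range.1 hm; omega
    have e0 : u + m - u = m := by omega
    have h1 : B.choose (u+m) * (u+m).choose u = B.choose u * (B-u).choose m := by
      have := Nat.choose_mul (n := B) (Nat.le_add_right u m)
      simpa using this
    have h2 : (B-u).choose (v-u) * (v-u).choose m = (B-u).choose m * ((B-u)-m).choose ((v-u)-m) := by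
      exact Nat.choose_mul (n := B-u) hm'
    have e1 : B - (u+m) = (B-u) - m := by omega
    have e2 : v - (u+m) = (v-u) - m := by omega
    rw [e0, e1, e2]
    have hcast1 : (B.choose (u+m) : ℝ) * ((u+m).choose u) = (B.choose u : ℝ) * ((B-u).choose m) := by
      exact_mod_cast congrArg (Nat.cast (R := ℝ)) h1
    have hcast2 : ((B-u).choose (v-u) : ℝ) * ((v-u).choose m)
        = ((B-u).choose m : ℝ) * (((B-u)-m).choose ((v-u)-m)) := by
      exact_mod_cast congrArg (Nat.cast (R := ℝ)) h2
    linear_combination ((-1:ℝ)^m * (((B-u)-m).choose ((v-u)-m) : ℝ)) * hcast1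
      - ((-1:ℝ)^m * (B.choose u : ℝ)) * hcast2
  rw [Finset.sum_congr rfl hrw, ← Finset.mul_sum]
  have e3 : v + 1 - u = (v - u) + 1 := by omega
  rw [e3]
  have halt : ∑ m ∈ range ((v-u)+1), (-1:ℝ)^m * ((v-u).choose m)
      = if v - u = 0 then 1 else 0 := by
    have h := Int.alternating_sum_range_choose (n := v - u)
    have h2 : ∑ m ∈ range ((v-u)+1), (-1:ℝ)^m * ((v-u).choose m)
        = ((if v - u = 0 then 1 else 0 : ℤ) : ℝ) := by
      exact_mod_cast congrArg (fun z : ℤ => (z : ℝ)) h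
    rw [h2]
    split <;> simp
  rw [halt]
  by_cases h : u = v
  · subst h
    simp
  · rw [if_neg (by omega), if_neg h, mul_zero]
lemma phi_star (B n v : ℕ) (hv : v ≤ B) :
    ∑ w ∈ range (v+1), ((B-w).choose (v-w) : ℝ) * phi B n w
      = (B.choose v : ℝ) / ((B:ℝ)+1-v)^n := by
  have hexp : ∀ w ∈ range (v+1),
      ((B-w).choose (v-w) : ℝ) * phi B n w
        = ∑ u ∈ range (v+1),
            (-1:ℝ)^(w-u) * ((B-w).choose (v-w)) * (B.choose w) * (w.choose u)
              / ((B:ℝ)+1-u)^n := by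
    intro w hw
    have hw' : w ≤ v := Nat.lt_succ_iff.1 (mem_range.1 hw)
    rw [phi, Finset.mul_sum, Finset.mul_sum]
    rw [Finset.sum_subset (Finset.range_subset_range.2 (by omega : w + 1 ≤ v + 1))
      (fun u _ hu => by
        rw [Nat.choose_eq_zero_of_lt (by simpa [Nat.lt_succ_iff] using hu : w < u)]
        simp)]
    refine Finset.sum_congr rfl fun u hu => ?_
    ring
  rw [Finset.sum_congr rfl hexp, Finset.sum_comm]
  have hcol : ∀ u ∈ range (v+1),
      ∑ w ∈ range (v+1),
          (-1:ℝ)^(w-u) * ((B-w).choose (v-w)) * (B.choose w) * (w.choose u)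
            / ((B:ℝ)+1-u)^n
        = (if u = v then (B.choose v : ℝ) else 0) / ((B:ℝ)+1-u)^n := by
    intro u hu
    rw [← Finset.sum_div, collapse B v u (Nat.lt_succ_iff.1 (mem_range.1 hu)) hv]
  rw [Finset.sum_congr rfl hcol]
  have : ∀ u ∈ range (v+1),
      (if u = v then (B.choose v : ℝ) else 0) / ((B:ℝ)+1-u)^n
        = if u = v then (B.choose u : ℝ) / ((B:ℝ)+1-u)^n else 0 := by
    intro u _
    split_ifs with h
    · subst h; rfl
    · simp
  rw [Finset.sum_congr rfl this, Finset.sum_ite_eq' (range (v+1)) v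
    (fun u => (B.choose u : ℝ) / ((B:ℝ)+1-u)^n), if_pos (self_mem_range_succ v)]

lemma pnu_eq_phi (B n : ℕ) : ∀ v, v ≤ B → pnu B n v = phi B n v := by
  intro v
  induction v using Nat.strong_induction_on with
  | _ v ih =>
    intro hv
    have h1 := star B n v hv
    have h2 := phi_star B n v hv
    rw [Finset.sum_range_succ] at h1 h2
    have hpre : ∑ w ∈ range v, ((B-w).choose (v-w) : ℝ) * pnu B n w
        = ∑ w ∈ range v, ((B-w).choose (v-w) : ℝ) * phi B n w :=
      Finset.sum_congr rfl fun w hw =>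
        congrArg _ (ih w (mem_range.1 hw) ((mem_range.1 hw).le.trans hv))
    have hlast : ((B-v).choose (v-v) : ℝ) = 1 := by
      rw [Nat.sub_self, Nat.choose_zero_right, Nat.cast_one]
    rw [hlast, one_mul] at h1 h2
    rw [hpre] at h1
    linarith [h1, h2]
lemma cast_pos_aux' (B v : ℕ) (hv : v ≤ B) : (0:ℝ) < (B:ℝ) + 1 - v := by
  have : (v:ℝ) ≤ B := Nat.cast_le.2 hv
  linarith

lemma phi_zero (B n : ℕ) : phi B n 0 = 1 / ((B:ℝ)+1)^n := by
  simp [phi]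

lemma pnu_base (B v : ℕ) : pnu B 0 v = if v = 0 then 1 else 0 := by
  rw [pnu, Fintype.sum_unique]
  simp [eq_comm]

lemma realkey (B m w : ℕ) (hm : m + 1 ≤ B) (hw : w ≤ m) :
    ((B:ℝ) - m) * (B.choose m) * (m.choose w)
      = ((m:ℝ) + 1 - w) * (B.choose (m+1)) * ((m+1).choose w) := by
  have h1 : (B.choose (m+1) : ℝ) * ((m:ℝ)+1) = (B.choose m : ℝ) * ((B:ℝ)-m) := by
    have := Nat.choose_succ_right_eq B m
    have hc : (B.choose (m+1) : ℝ) * ((m+1 : ℕ) : ℝ) = (B.choose m : ℝ) * ((B - m : ℕ) : ℝ) := by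
      exact_mod_cast congrArg (fun z : ℕ => (z : ℝ)) this
    rw [Nat.cast_sub (by omega)] at hc
    push_cast at hc ⊢
    linarith
  have h2 : (m.choose w : ℝ) * ((m:ℝ)+1) = ((m+1).choose w : ℝ) * ((m:ℝ)+1-w) := by
    have := Nat.choose_mul_succ_eq m w
    have hc : (m.choose w : ℝ) * ((m+1 : ℕ) : ℝ) = ((m+1).choose w : ℝ) * ((m+1-w : ℕ) : ℝ) := by
      exact_mod_cast congrArg (fun z : ℕ => (z : ℝ)) this
    rw [Nat.cast_sub (by omega)] at hc
    push_cast at hc ⊢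
    linarith
  linear_combination (-(m.choose w : ℝ)) * h1 + (B.choose (m+1) : ℝ) * h2

lemma term_id (t d D C1 C0 c2 c0 s μ : ℝ) (ht : t ≠ 0) (hd : d ≠ 0) (hD : D ≠ 0)
    (hkey : D * (C0 * c0) = μ * (C1 * c2)) (hdiff : d - D = μ) :
    C1 * (-s * c2 / (t * d)) = C0 * (s * c0 / (t * d)) + C1 * (-s * c2 / t) / D := by
  field_simp
  linear_combination (-s) * hkey + (s*C1*c2) * hdiff

lemma phi_rec (B k m : ℕ) (hm : m + 1 ≤ B) :
    phi B (k+1) (m+1) = phi B (k+1) m + phi B k (m+1) / ((B:ℝ) - m) := by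
  have hD : (0:ℝ) < (B:ℝ) - m := by
    have : ((m:ℝ)+1) ≤ B := by exact_mod_cast Nat.cast_le.2 hm
    linarith
  -- extend phi B (k+1) m to a sum over range (m+2)
  have hphi_m : phi B (k+1) m
      = ∑ w ∈ range (m+2), (B.choose m : ℝ) * ((-1:ℝ)^(m-w) * (m.choose w) / ((B:ℝ)+1-w)^(k+1)) := by
    rw [phi, Finset.mul_sum]
    exact Finset.sum_subset (Finset.range_subset_range.2 (by omega))
      (fun u _ hu => by
        rw [Nat.choose_eq_zero_of_lt (by simpa [Nat.lt_succ_iff] using hu : m < u)]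
        simp)
  have hphi1 : phi B (k+1) (m+1)
      = ∑ w ∈ range (m+2), (B.choose (m+1) : ℝ) * ((-1:ℝ)^(m+1-w) * ((m+1).choose w) / ((B:ℝ)+1-w)^(k+1)) := by
    rw [phi, Finset.mul_sum]
  have hphi3 : phi B k (m+1) / ((B:ℝ) - m)
      = ∑ w ∈ range (m+2), (B.choose (m+1) : ℝ) * ((-1:ℝ)^(m+1-w) * ((m+1).choose w) / ((B:ℝ)+1-w)^k) / ((B:ℝ)-m) := by
    rw [phi, Finset.mul_sum, Finset.sum_div]
  rw [hphi1, hphi_m, hphi3, ← Finset.sum_add_distrib]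
  refine Finset.sum_congr rfl fun w hw => ?_
  have hw' : w ≤ m + 1 := Nat.lt_succ_iff.1 (mem_range.1 hw)
  have hd : (0:ℝ) < (B:ℝ)+1-w := cast_pos_aux' B w (by omega)
  rcases Nat.lt_or_ge w (m+1) with hlt | hge
  · -- w ≤ m
    have hwm : w ≤ m := by omega
    have hsign : (-1:ℝ)^(m+1-w) = -(-1:ℝ)^(m-w) := by
      have : m + 1 - w = (m - w) + 1 := by omega
      rw [this, pow_succ]
      ring
    have hkey := realkey B m w hm hwm
    have hdw : ((B:ℝ)+1-w) ≠ 0 := ne_of_gt hd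
    have hDw : ((B:ℝ)-m) ≠ 0 := ne_of_gt hD
    have hdiff : ((B:ℝ)+1-w) - ((B:ℝ)-m) = (m:ℝ)+1-w := by ring
    have hpow : ((B:ℝ)+1-w)^(k+1) = ((B:ℝ)+1-w)^k * ((B:ℝ)+1-w) := pow_succ _ _
    rw [hsign, hpow]
    exact term_id (((B:ℝ)+1-w)^k) ((B:ℝ)+1-w) ((B:ℝ)-m) (B.choose (m+1) : ℝ)
      (B.choose m : ℝ) (((m+1).choose w : ℝ)) ((m.choose w : ℝ)) ((-1:ℝ)^(m-w)) ((m:ℝ)+1-w)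
      (pow_ne_zero _ hdw) hdw hDw (by linear_combination hkey) hdiff
  · -- w = m + 1
    have hw1 : w = m + 1 := by omega
    subst hw1
    rw [Nat.choose_eq_zero_of_lt (by omega : m < m+1)]
    have he : (B:ℝ)+1-((m:ℕ)+1 : ℕ) = (B:ℝ) - m := by push_cast; ring
    rw [he]
    have hpow : ((B:ℝ)-m)^(k+1) = ((B:ℝ)-m)^k * ((B:ℝ)-m) := pow_succ _ _
    rw [hpow]
    have hDw : ((B:ℝ)-m) ≠ 0 := ne_of_gt hD
    have hsame : m + 1 - (m+1) = 0 := by omega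
    rw [hsame]
    field_simp
    simp

/-- for `B ≥ 1` and `n ≥ 1`: `p_n(0;μ) = (B+1)⁻ⁿ`, and for `1 ≤ v ≤ B`,
`p_n(v;μ) = p_n(v-1;μ) + p_{n-1}(v;μ)/(B-v+1)`, with base case `p_0(0;μ) = 1` and
`p_0(v;μ) = 0` for `v ≠ 0`. -/
theorem stmt6 (B : ℕ) (hB : 1 ≤ B) (n : ℕ) (hn : 1 ≤ n) :
    pnu B n 0 = 1 / ((B : ℝ) + 1) ^ n ∧
    (∀ v : ℕ, 1 ≤ v → v ≤ B →
      pnu B n v = pnu B n (v - 1) + pnu B (n - 1) v / ((B : ℝ) - v + 1)) ∧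
    pnu B 0 0 = 1 ∧ (∀ w : ℕ, w ≠ 0 → pnu B 0 w = 0) := by
  refine ⟨?_, ?_, ?_, ?_⟩
  · rw [pnu_eq_phi B n 0 (Nat.zero_le B), phi_zero]
  · intro v hv1 hv2
    obtain ⟨m, rfl⟩ : ∃ m, v = m + 1 := ⟨v - 1, by omega⟩
    obtain ⟨k, rfl⟩ : ∃ k, n = k + 1 := ⟨n - 1, by omega⟩
    rw [pnu_eq_phi B (k+1) (m+1) hv2, show m + 1 - 1 = m from rfl,
      pnu_eq_phi B (k+1) m (by omega), show k + 1 - 1 = k from rfl,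
      pnu_eq_phi B k (m+1) hv2]
    have he : (B:ℝ) - (↑(m+1) : ℝ) + 1 = (B:ℝ) - m := by push_cast; ring
    rw [he]
    exact phi_rec B k m hv2
  · rw [pnu_base]
    simp
  · intro w hw
    rw [pnu_base, if_neg hw]
end

section
/- Fix an integer B ≥ 1. For every n ≥ 1 and every 0 ≤ v ≤ B−1, the probability that exactly v blocks are collectively held by n independent peers in the γ = ∞ model is given in closed form by p_n(v) = C(B,v) · ((B+1)/B)^n · ∑_{l=0}^{v} C(v,l) (−1)^l (B−v+l+1)^{−n}, and p_n(B) = 1 − ∑_{v=0}^{B−1} p_n(v). -/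
/-- Single-peer block-ownership distribution in the `γ = ∞` model: a peer owning
`h ≤ B - 1` blocks has a uniformly random `h`-element subset, with `h` uniform on
`{0, …, B-1}`; the full set has probability `0`. -/
noncomputable def wmu (B : ℕ) (s : Finset (Fin B)) : ℝ :=
  if s.card < B then 1 / (B * (B.choose s.card)) else 0

/-- `pmu B n v` : probability that exactly `v` blocks are collectively held by `n`
independent peers, each with block set drawn from `wmu B`. -/
noncomputable def pmu (B n v : ℕ) : ℝ :=
  ∑ f : Fin n → Finset (Fin B),
    if (Finset.univ.biUnion f).card = v then ∏ u, wmu B (f u) else 0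

open Finset

lemma hockey (B t : ℕ) (ht : t ≤ B) :
    ∑ h ∈ range (t+1), (B - h).choose (t - h) = (B+1).choose t := by
  have := Finset.sum_range_reflect (fun h => (B - h).choose (t - h)) (t+1)
  simp only [Nat.add_sub_cancel] at this
  rw [← this]
  have h1 : ∀ j ∈ range (t+1), (B - (t - j)).choose (t - (t - j)) = (B - t + j).choose (B - t) := by
    intro j hj
    rw [mem_range, Nat.lt_succ_iff] at hj
    rw [Nat.sub_sub_self hj]
    have e : B - (t - j) = B - t + j := by omega
    rw [e]
    exact Nat.choose_symm_of_eq_add (by omega)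
  rw [Finset.sum_congr rfl h1]
  have h2 := Nat.sum_Icc_choose B (B - t)
  rw [← Finset.Ico_add_one_right_eq_Icc, Finset.sum_Ico_eq_sum_range] at h2
  have e2 : B + 1 - (B - t) = t + 1 := by omega
  rw [e2] at h2
  rw [h2]
  exact Nat.choose_symm_of_eq_add (by omega)

lemma ratio (B t : ℕ) (ht : t ≤ B) :
    ∑ h ∈ range (t+1), (t.choose h : ℝ)/(B.choose h) = ((B:ℝ)+1)/((B:ℝ)+1-(t:ℝ)) := by
  have hBt : (0:ℝ) < (B.choose t : ℝ) := by exact_mod_cast Nat.choose_pos ht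
  have step : ∀ h ∈ range (t+1),
      (t.choose h : ℝ)/(B.choose h) = ((B-h).choose (t-h) : ℝ)/(B.choose t) := by
    intro h hh; rw [mem_range, Nat.lt_succ_iff] at hh
    have key := Nat.choose_mul (n := B) hh
    have h1 : (0:ℝ) < (B.choose h : ℝ) := by exact_mod_cast Nat.choose_pos (hh.trans ht)
    rw [div_eq_div_iff h1.ne' hBt.ne']
    have k2 : t.choose h * B.choose t = (B - h).choose (t - h) * B.choose h := by
      rw [mul_comm, key, mul_comm]
    exact_mod_cast k2
  rw [Finset.sum_congr rfl step, ← Finset.sum_div, ← Nat.cast_sum, hockey B t ht]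
  have hpos : (0:ℝ) < (B:ℝ)+1-(t:ℝ) := by
    have : (t:ℝ) ≤ B := by exact_mod_cast ht
    linarith
  rw [div_eq_div_iff hBt.ne' hpos.ne']
  have key2 := Nat.choose_mul_succ_eq B t
  have : ((B+1).choose t : ℝ) * ((B:ℝ)+1-(t:ℝ)) = (B.choose t : ℝ) * ((B:ℝ)+1) := by
    have hc : ((B+1-t:ℕ):ℝ) = (B:ℝ)+1-(t:ℝ) := by
      push_cast [Nat.cast_sub (by omega : t ≤ B+1)]; ring
    rw [← hc]
    exact_mod_cast key2.symm
  linarith [this]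

/-- Closed form for the single-peer probability of drawing a subset of `T`. -/
lemma sum_powerset_wmu (B : ℕ) (T : Finset (Fin B)) (hT : T.card < B) :
    ∑ s ∈ T.powerset, wmu B s = ((B:ℝ)+1)/((B:ℝ)*((B:ℝ)+1-(T.card:ℝ))) := by
  have step : ∀ s ∈ T.powerset, wmu B s = (1:ℝ) / (B * (B.choose s.card)) := by
    intro s hs
    rw [mem_powerset] at hs
    have : s.card < B := lt_of_le_of_lt (card_le_card hs) hT
    simp [wmu, this]
  rw [Finset.sum_congr rfl step]
  rw [Finset.sum_powerset_apply_card (fun m => (1:ℝ)/(B * B.choose m))]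
  simp only [nsmul_eq_mul]
  have step2 : ∀ m ∈ range (T.card+1), (T.card.choose m : ℝ) * ((1:ℝ)/(B * B.choose m))
      = (1/(B:ℝ)) * ((T.card.choose m : ℝ)/(B.choose m)) := by
    intro m _; ring
  rw [Finset.sum_congr rfl step2, ← Finset.mul_sum, ratio B T.card hT.le]
  have hBne : (B:ℝ) ≠ 0 := by
    have : 0 < B := by omega
    exact_mod_cast this.ne'
  have hX : ((B:ℝ)+1-(T.card:ℝ)) ≠ 0 := by
    have : (T.card:ℝ) ≤ B := by exact_mod_cast hT.le
    linarith
  field_simp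


/-- The single-peer weights sum to `1`. -/
lemma sum_wmu_total (B : ℕ) (hB : 1 ≤ B) : ∑ s : Finset (Fin B), wmu B s = 1 := by
  have huniv : (Finset.univ : Finset (Finset (Fin B))) = (Finset.univ : Finset (Fin B)).powerset := by
    simp
  rw [huniv]
  have step : ∀ s ∈ (Finset.univ : Finset (Fin B)).powerset,
      wmu B s = (fun m => if m < B then (1:ℝ)/(B * B.choose m) else 0) s.card := by
    intro s _; rfl
  rw [Finset.sum_congr rfl step,
    Finset.sum_powerset_apply_card (fun m => if m < B then (1:ℝ)/(B * B.choose m) else 0)]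
  have hcard : (Finset.univ : Finset (Fin B)).card = B := by simp
  rw [hcard, Finset.sum_range_succ]
  simp only [lt_irrefl, if_neg, smul_zero, add_zero, nsmul_eq_mul]
  have step2 : ∀ m ∈ range B,
      (B.choose m : ℝ) * (if m < B then (1:ℝ)/(B * B.choose m) else 0) = 1/(B:ℝ) := by
    intro m hm
    rw [mem_range] at hm
    rw [if_pos hm]
    have h1 : (B.choose m : ℝ) ≠ 0 := by exact_mod_cast (Nat.choose_pos hm.le).ne'
    have h2 : (B:ℝ) ≠ 0 := by exact_mod_cast (by omega : 0 < B).ne'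
    field_simp
  rw [Finset.sum_congr rfl step2, Finset.sum_const, Finset.card_range, nsmul_eq_mul]
  have h2 : (B:ℝ) ≠ 0 := by exact_mod_cast (by omega : 0 < B).ne'
  field_simp
  simp

/-- Probability that all `n` peers draw subsets of `T`. -/
lemma subset_sum (B n : ℕ) (T : Finset (Fin B)) :
    ∑ f : Fin n → Finset (Fin B),
      (if Finset.univ.biUnion f ⊆ T then ∏ u, wmu B (f u) else 0)
      = (∑ s ∈ T.powerset, wmu B s) ^ n := by
  have h1 : (∑ s ∈ T.powerset, wmu B s) ^ n = ∏ _u : Fin n, ∑ s ∈ T.powerset, wmu B s := by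
    rw [Finset.prod_const, Finset.card_univ, Fintype.card_fin]
  rw [h1, Finset.prod_univ_sum]
  have h2 : ∀ f : Fin n → Finset (Fin B),
      (if Finset.univ.biUnion f ⊆ T then ∏ u, wmu B (f u) else 0)
      = if f ∈ Fintype.piFinset (fun _ : Fin n => T.powerset) then ∏ u, wmu B (f u) else 0 := by
    intro f
    congr 1
    simp [Fintype.mem_piFinset, Finset.biUnion_subset, eq_iff_iff]
  rw [Finset.sum_congr rfl (fun f _ => h2 f)]
  rw [Finset.sum_ite_mem, Finset.univ_inter]


/-- Inclusion–exclusion kernel over the powerset of `T`. -/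
lemma neg_one_powerset_sum (B : ℕ) (T R : Finset (Fin B)) :
    ∑ U ∈ T.powerset, (if R ⊆ U then (-1:ℝ)^T.card * (-1:ℝ)^U.card else 0)
      = if R = T then 1 else 0 := by
  rw [← Finset.sum_filter]
  by_cases hRT : R ⊆ T
  · have hbij : ∑ U ∈ (T.powerset.filter (fun U => R ⊆ U)), (-1:ℝ)^T.card * (-1:ℝ)^U.card
        = ∑ W ∈ (T \ R).powerset, ((-1:ℝ)^T.card * (-1:ℝ)^R.card) * (-1:ℝ)^W.card := by
      refine Finset.sum_nbij' (fun U => U \ R) (fun W => R ∪ W) ?_ ?_ ?_ ?_ ?_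
      · intro U hU
        simp only [Finset.mem_filter, Finset.mem_powerset] at hU
        exact Finset.mem_powerset.2 (Finset.sdiff_subset_sdiff hU.1 le_rfl)
      · intro W hW
        rw [Finset.mem_powerset] at hW
        simp only [Finset.mem_filter, Finset.mem_powerset]
        exact ⟨Finset.union_subset hRT (hW.trans Finset.sdiff_subset),
          Finset.subset_union_left⟩
      · intro U hU
        simp only [Finset.mem_filter, Finset.mem_powerset] at hU
        exact Finset.union_sdiff_of_subset hU.2
      · intro W hW
        rw [Finset.mem_powerset] at hW
        refine Finset.union_sdiff_cancel_left ?_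
        exact Finset.disjoint_left.2 fun a haR haW =>
          (Finset.mem_sdiff.1 (hW haW)).2 haR
      · intro U hU
        simp only [Finset.mem_filter, Finset.mem_powerset] at hU
        have hcard : U.card = R.card + (U \ R).card := by
          have := Finset.card_sdiff_add_card_eq_card hU.2
          omega
        rw [hcard, pow_add, mul_assoc]
    rw [hbij, ← Finset.mul_sum]
    have hz : ∑ W ∈ (T \ R).powerset, ((-1:ℝ))^W.card
        = if T \ R = ∅ then 1 else 0 := by
      have h := Finset.sum_powerset_neg_one_pow_card (α := Fin B) (x := T \ R)
      have h2 := congrArg (fun z : ℤ => (z : ℝ)) h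
      push_cast at h2
      convert h2 using 1
    rw [hz]
    by_cases hEq : R = T
    · subst hEq
      simp only [Finset.sdiff_self, if_true]
      rw [mul_one, ← pow_add]
      exact Even.neg_one_pow ⟨R.card, rfl⟩
    · have hne : T \ R ≠ ∅ := by
        intro h0
        exact hEq (Finset.Subset.antisymm hRT (Finset.sdiff_eq_empty_iff_subset.1 h0))
      rw [if_neg hne, if_neg hEq, mul_zero]
  · have hempty : T.powerset.filter (fun U => R ⊆ U) = ∅ := by
      rw [Finset.filter_eq_empty_iff]
      intro U hU hRU
      exact hRT (hRU.trans (Finset.mem_powerset.1 hU))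
    rw [hempty, Finset.sum_empty, if_neg (by rintro rfl; exact hRT le_rfl)]


/-- Möbius inversion: probability that the union is exactly `T`. -/
lemma exact_sum (B n : ℕ) (T : Finset (Fin B)) :
    ∑ f : Fin n → Finset (Fin B),
      (if Finset.univ.biUnion f = T then ∏ u, wmu B (f u) else 0)
      = ∑ U ∈ T.powerset, (-1:ℝ)^T.card * (-1:ℝ)^U.card * (∑ s ∈ U.powerset, wmu B s) ^ n := by
  have step : ∀ U ∈ T.powerset,
      (-1:ℝ)^T.card * (-1:ℝ)^U.card * (∑ s ∈ U.powerset, wmu B s) ^ n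
      = ∑ f : Fin n → Finset (Fin B),
          (if Finset.univ.biUnion f ⊆ U then ((-1:ℝ)^T.card * (-1:ℝ)^U.card) else 0)
            * ∏ u, wmu B (f u) := by
    intro U _
    rw [← subset_sum B n U, Finset.mul_sum]
    refine Finset.sum_congr rfl fun f _ => ?_
    split_ifs <;> simp
  rw [Finset.sum_congr rfl step, Finset.sum_comm]
  refine Finset.sum_congr rfl fun f _ => ?_
  rw [← Finset.sum_mul, neg_one_powerset_sum B T (Finset.univ.biUnion f)]
  split_ifs <;> simp

/-- for `B ≥ 1`, `n ≥ 1` and `0 ≤ v ≤ B-1`, in the `γ = ∞` model,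
`p_n(v) = C(B,v) ((B+1)/B)^n ∑_{l=0}^{v} C(v,l) (-1)^l (B-v+l+1)^{-n}`, and
`p_n(B) = 1 - ∑_{v=0}^{B-1} p_n(v)`. -/
theorem stmt7 (B n : ℕ) (hB : 1 ≤ B) (hn : 1 ≤ n) :
    (∀ v : ℕ, v ≤ B - 1 →
      pmu B n v = (B.choose v : ℝ) * (((B : ℝ) + 1) / (B : ℝ)) ^ n *
        ∑ l ∈ Finset.range (v + 1),
          (v.choose l : ℝ) * (-1 : ℝ) ^ l / ((B : ℝ) - v + l + 1) ^ n) ∧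
    pmu B n B = 1 - ∑ v ∈ Finset.range B, pmu B n v := by
  constructor
  · intro v hv
    have hvB : v < B := by omega
    -- Step A: split by the exact union
    have hA : pmu B n v
        = ∑ T ∈ Finset.powersetCard v (Finset.univ : Finset (Fin B)),
            ∑ f : Fin n → Finset (Fin B),
              (if Finset.univ.biUnion f = T then ∏ u, wmu B (f u) else 0) := by
      rw [Finset.sum_comm, pmu]
      refine Finset.sum_congr rfl fun f _ => ?_
      rw [Finset.sum_ite_eq (Finset.powersetCard v Finset.univ) (Finset.univ.biUnion f)
        (fun _ => ∏ u, wmu B (f u))]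
      congr 1
      simp [Finset.mem_powersetCard_univ, eq_iff_iff]
    -- the common value of the inner sum
    set Cv : ℝ := ∑ m ∈ Finset.range (v+1),
        (v.choose m : ℝ) * ((-1:ℝ)^v * (-1:ℝ)^m
          * (((B:ℝ)+1)/((B:ℝ)*((B:ℝ)+1-(m:ℝ))))^n) with hCv
    have hB2 : ∀ T ∈ Finset.powersetCard v (Finset.univ : Finset (Fin B)),
        (∑ f : Fin n → Finset (Fin B),
          (if Finset.univ.biUnion f = T then ∏ u, wmu B (f u) else 0)) = Cv := by
      intro T hT
      have hTc : T.card = v := Finset.mem_powersetCard_univ.1 hT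
      rw [exact_sum B n T]
      have step : ∀ U ∈ T.powerset,
          (-1:ℝ)^T.card * (-1:ℝ)^U.card * (∑ s ∈ U.powerset, wmu B s) ^ n
          = (fun m : ℕ => (-1:ℝ)^v * (-1:ℝ)^m
              * (((B:ℝ)+1)/((B:ℝ)*((B:ℝ)+1-(m:ℝ))))^n) U.card := by
        intro U hU
        have hUc : U.card < B :=
          lt_of_le_of_lt (le_trans (Finset.card_le_card (Finset.mem_powerset.1 hU)) hTc.le) hvB
        rw [sum_powerset_wmu B U hUc, hTc]
      rw [Finset.sum_congr rfl step,
        Finset.sum_powerset_apply_card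
          (fun m : ℕ => (-1:ℝ)^v * (-1:ℝ)^m * (((B:ℝ)+1)/((B:ℝ)*((B:ℝ)+1-(m:ℝ))))^n), hTc]
      refine Finset.sum_congr rfl fun m _ => ?_
      rw [nsmul_eq_mul]
    rw [hA, Finset.sum_congr rfl hB2, Finset.sum_const, Finset.card_powersetCard,
      Finset.card_univ, Fintype.card_fin, nsmul_eq_mul]
    -- Step D: reindex and simplify
    have hD : Cv = (((B:ℝ)+1)/(B:ℝ))^n *
        ∑ l ∈ Finset.range (v + 1), (v.choose l : ℝ) * (-1 : ℝ) ^ l / ((B:ℝ) - v + l + 1) ^ n := by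
      rw [hCv, ← Finset.sum_range_reflect, Finset.mul_sum]
      refine Finset.sum_congr rfl fun l hl => ?_
      rw [Finset.mem_range, Nat.lt_succ_iff] at hl
      have e1 : v + 1 - 1 - l = v - l := by omega
      rw [e1]
      have e2 : (v.choose (v - l) : ℝ) = (v.choose l : ℝ) := by
        exact_mod_cast Nat.choose_symm hl
      have e3 : (-1:ℝ)^v * (-1:ℝ)^(v-l) = (-1:ℝ)^l := by
        rw [← pow_add]
        have : v + (v - l) = 2*(v-l) + l := by omega
        rw [this, pow_add, pow_mul, neg_one_sq, one_pow, one_mul]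
      have e4 : ((v - l : ℕ) : ℝ) = (v:ℝ) - (l:ℝ) := by
        exact Nat.cast_sub hl
      have hBpos : (0:ℝ) < (B:ℝ) := by exact_mod_cast (by omega : 0 < B)
      have hXpos : (0:ℝ) < (B:ℝ) - (v:ℝ) + (l:ℝ) + 1 := by
        have : (v:ℝ) ≤ (B:ℝ) := by exact_mod_cast hvB.le
        have hl' : (0:ℝ) ≤ (l:ℝ) := by positivity
        linarith
      rw [e2, e4]
      have e5 : (B:ℝ) + 1 - ((v:ℝ) - (l:ℝ)) = (B:ℝ) - v + l + 1 := by ring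
      rw [e5, mul_comm ((-1:ℝ)^v) ((-1:ℝ)^(v-l)), ← mul_comm ((-1:ℝ)^v) _]
      rw [← e3]
      rw [div_pow, mul_pow, div_pow]
      field_simp
    rw [hD]
    ring
  · -- total probability is 1
    have htot : ∑ v ∈ Finset.range (B+1), pmu B n v = 1 := by
      simp only [pmu]
      rw [Finset.sum_comm]
      have hinner : ∀ f : Fin n → Finset (Fin B),
          ∑ v ∈ Finset.range (B+1),
            (if (Finset.univ.biUnion f).card = v then ∏ u, wmu B (f u) else 0)
          = ∏ u, wmu B (f u) := by
        intro f
        rw [Finset.sum_ite_eq (Finset.range (B+1)) ((Finset.univ.biUnion f).card)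
          (fun _ => ∏ u, wmu B (f u))]
        rw [if_pos]
        rw [Finset.mem_range, Nat.lt_succ_iff]
        calc (Finset.univ.biUnion f).card ≤ (Finset.univ : Finset (Fin B)).card :=
              Finset.card_le_univ _
          _ = B := by simp
      rw [Finset.sum_congr rfl fun f _ => hinner f]
      have : ∀ f : Fin n → Finset (Fin B),
          (∏ u, wmu B (f u))
          = (if Finset.univ.biUnion f ⊆ Finset.univ then ∏ u, wmu B (f u) else 0) := by
        intro f; rw [if_pos (Finset.subset_univ _)]
      rw [Finset.sum_congr rfl fun f _ => this f, subset_sum B n Finset.univ,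
        Finset.powerset_univ, sum_wmu_total B hB, one_pow]
    rw [Finset.sum_range_succ] at htot
    linarith
end

section
/- Fix an integer B ≥ 1, an integer 1 ≤ l ≤ B, and a real ρ ≥ 0. Let L be a subset of {1,…,B} with |L| = l. Then the Poisson mixture ∑_{n=0}^{∞} e^{−(B+1)ρ} ((B+1)ρ)^n / n! · P(L ∩ (S_1 ∪ ⋯ ∪ S_n) = ∅), where S_1,…,S_n are independent draws from ν_B, equals exp(−ρ·l·(B+1)/(l+1)). That is, the steady-state probability that l tagged blocks are simultaneously unavailable among the peers is exp(−ρ(B+1)l/(l+1)). -/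
lemma subcomm (B l j : ℕ) (hlB : l ≤ B) (hj : j ≤ B - l) :
    (B - l).choose j * B.choose l = B.choose j * (B - j).choose l := by
  have hjB : j ≤ B := le_trans hj (Nat.sub_le B l)
  have hlBj : l ≤ B - j := by omega
  have h1 := Nat.choose_mul_factorial_mul_factorial hj
  have h2 := Nat.choose_mul_factorial_mul_factorial hlB
  have h3 := Nat.choose_mul_factorial_mul_factorial hjB
  have h4 := Nat.choose_mul_factorial_mul_factorial hlBj
  have hs : B - j - l = B - l - j := by omega
  rw [hs] at h4
  have key : ((B - l).choose j * B.choose l) *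
        (j.factorial * (l.factorial * (B - l - j).factorial))
      = (B.choose j * (B - j).choose l) *
        (j.factorial * (l.factorial * (B - l - j).factorial)) := by
    calc ((B - l).choose j * B.choose l) *
          (j.factorial * (l.factorial * (B - l - j).factorial))
        = (B.choose l * l.factorial) *
          ((B - l).choose j * j.factorial * (B - l - j).factorial) := by ring
      _ = (B.choose l * l.factorial) * (B - l).factorial := by rw [h1]
      _ = B.factorial := by rw [mul_assoc] at h2 ⊢; exact h2
      _ = B.choose j * j.factorial * (B - j).factorial := h3.symm
      _ = B.choose j * j.factorial * ((B - j).choose l * l.factorial *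
            (B - l - j).factorial) := by rw [h4]
      _ = (B.choose j * (B - j).choose l) *
          (j.factorial * (l.factorial * (B - l - j).factorial)) := by ring
  exact Nat.eq_of_mul_eq_mul_right (by positivity) key

lemma hockey_s12 (B l : ℕ) (hlB : l ≤ B) :
    ∑ j ∈ Finset.range (B - l + 1), (B - j).choose l = (B + 1).choose (l + 1) := by
  rw [← Finset.sum_range_reflect]
  have h : ∀ j ∈ Finset.range (B - l + 1),
      (B - (B - l + 1 - 1 - j)).choose l = (j + l).choose l := by
    intro j hj
    rw [Finset.mem_range] at hj
    congr 1
    omega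
  rw [Finset.sum_congr rfl h, Nat.sum_range_add_choose]
  congr 1
  omega

lemma qval (B l : ℕ) (hlB : l ≤ B) :
    ∑ j ∈ Finset.range (B - l + 1),
        ((B - l).choose j : ℝ) * (1 / (((B : ℝ) + 1) * (B.choose j)))
      = 1 / ((l : ℝ) + 1) := by
  have hBl : (0 : ℝ) < (B.choose l : ℝ) := by exact_mod_cast Nat.choose_pos hlB
  have hB1 : (0 : ℝ) < (B : ℝ) + 1 := by positivity
  have step : ∀ j ∈ Finset.range (B - l + 1),
      ((B - l).choose j : ℝ) * (1 / (((B : ℝ) + 1) * (B.choose j)))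
        = ((B - j).choose l : ℝ) / (((B : ℝ) + 1) * (B.choose l)) := by
    intro j hj
    rw [Finset.mem_range] at hj
    have hj' : j ≤ B - l := by omega
    have hjB : j ≤ B := le_trans hj' (Nat.sub_le B l)
    have hBj : (0 : ℝ) < (B.choose j : ℝ) := by exact_mod_cast Nat.choose_pos hjB
    have hkey : ((B - l).choose j : ℝ) * (B.choose l : ℝ)
        = (B.choose j : ℝ) * ((B - j).choose l : ℝ) := by
      exact_mod_cast congrArg (Nat.cast : ℕ → ℝ) (subcomm B l j hlB hj')
    field_simp
    linear_combination hkey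
  rw [Finset.sum_congr rfl step, ← Finset.sum_div]
  have hsum : (∑ j ∈ Finset.range (B - l + 1), ((B - j).choose l : ℝ))
      = ((B + 1).choose (l + 1) : ℝ) := by
    exact_mod_cast congrArg (Nat.cast : ℕ → ℝ) (hockey_s12 B l hlB)
  rw [hsum]
  have hmul : ((B : ℝ) + 1) * (B.choose l : ℝ)
      = ((B + 1).choose (l + 1) : ℝ) * ((l : ℝ) + 1) := by
    exact_mod_cast congrArg (Nat.cast : ℕ → ℝ) (Nat.add_one_mul_choose_eq B l)
  have hch : (0 : ℝ) < ((B + 1).choose (l + 1) : ℝ) := by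
    exact_mod_cast Nat.choose_pos (by omega : l + 1 ≤ B + 1)
  rw [hmul]
  rw [div_eq_div_iff (by positivity) (by positivity)]
  ring

lemma single (B l : ℕ) (hlB : l ≤ B) (L : Finset (Fin B)) (hL : L.card = l) :
    (∑ s : Finset (Fin B), if L ∩ s = ∅ then wnu B s else 0)
      = 1 / ((l : ℝ) + 1) := by
  classical
  rw [← Finset.sum_filter]
  have hfilter : Finset.univ.filter (fun s : Finset (Fin B) => L ∩ s = ∅)
      = Lᶜ.powerset := by
    ext s
    simp only [Finset.mem_filter, Finset.mem_univ, true_and, Finset.mem_powerset,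
      ← Finset.disjoint_iff_inter_eq_empty, ← Finset.le_iff_subset]
    exact le_compl_iff_disjoint_left.symm
  rw [hfilter]
  have : ∑ s ∈ Lᶜ.powerset, wnu B s
      = ∑ m ∈ Finset.range (Lᶜ.card + 1),
          Lᶜ.card.choose m • (1 / (((B : ℝ) + 1) * (B.choose m))) := by
    rw [← Finset.sum_powerset_apply_card (fun k => 1 / (((B : ℝ) + 1) * (B.choose k)))]
    rfl
  rw [this]
  have hcard : Lᶜ.card = B - l := by
    rw [Finset.card_compl, hL, Fintype.card_fin]
  rw [hcard]
  simp only [nsmul_eq_mul]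
  exact qval B l hlB

lemma inner_eq (B l n : ℕ) (hlB : l ≤ B) (L : Finset (Fin B)) (hL : L.card = l) :
    (∑ f : Fin n → Finset (Fin B),
        if L ∩ Finset.univ.biUnion f = ∅ then ∏ u, wnu B (f u) else 0)
      = (1 / ((l : ℝ) + 1)) ^ n := by
  classical
  have hterm : ∀ f : Fin n → Finset (Fin B),
      (if L ∩ Finset.univ.biUnion f = ∅ then ∏ u, wnu B (f u) else 0)
        = ∏ u, (if L ∩ f u = ∅ then wnu B (f u) else 0) := by
    intro f
    by_cases h : L ∩ Finset.univ.biUnion f = ∅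
    · rw [if_pos h]
      refine Finset.prod_congr rfl fun u _ => ?_
      rw [if_pos]
      have hsub : L ∩ f u ⊆ L ∩ Finset.univ.biUnion f :=
        Finset.inter_subset_inter (le_refl L)
          (Finset.subset_biUnion_of_mem f (Finset.mem_univ u))
      rw [h] at hsub
      exact Finset.subset_empty.mp hsub
    · rw [if_neg h]
      obtain ⟨x, hx⟩ := Finset.nonempty_iff_ne_empty.mpr h
      rw [Finset.mem_inter, Finset.mem_biUnion] at hx
      obtain ⟨hxL, u, _, hxu⟩ := hx
      refine (Finset.prod_eq_zero (Finset.mem_univ u) ?_).symm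
      rw [if_neg]
      intro hempty
      have : x ∈ L ∩ f u := Finset.mem_inter.mpr ⟨hxL, hxu⟩
      rw [hempty] at this
      exact absurd this (Finset.notMem_empty x)
  rw [Finset.sum_congr rfl fun f _ => hterm f]
  have := (Finset.prod_univ_sum (fun _ : Fin n => (Finset.univ : Finset (Finset (Fin B))))
    (fun _ s => if L ∩ s = ∅ then wnu B s else 0)).symm
  rw [Fintype.piFinset_univ] at this
  rw [this, Finset.prod_const, single B l hlB L hL, Finset.card_univ, Fintype.card_fin]

/-- for `B ≥ 1`, `1 ≤ l ≤ B`, `ρ ≥ 0` and a subset `L` of the blocks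
with `|L| = l`, the Poisson mixture (with mean `(B+1)ρ`) of the probability that
the `l` tagged blocks `L` are unavailable among `n` independent peers equals
`exp(-ρ l (B+1)/(l+1))`. -/
theorem stmt12 (B l : ℕ) (hB : 1 ≤ B) (hl1 : 1 ≤ l) (hlB : l ≤ B)
    (ρ : ℝ) (hρ : 0 ≤ ρ) (L : Finset (Fin B)) (hL : L.card = l) :
    (∑' n : ℕ, Real.exp (-(((B : ℝ) + 1) * ρ)) * (((B : ℝ) + 1) * ρ) ^ n / n.factorial *
        (∑ f : Fin n → Finset (Fin B),
          if L ∩ Finset.univ.biUnion f = ∅ then ∏ u, wnu B (f u) else 0))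
      = Real.exp (-(ρ * l * ((B : ℝ) + 1) / ((l : ℝ) + 1))) := by
  have hl : (0 : ℝ) < (l : ℝ) + 1 := by positivity
  have hterm : ∀ n : ℕ,
      Real.exp (-(((B : ℝ) + 1) * ρ)) * (((B : ℝ) + 1) * ρ) ^ n / n.factorial *
        (∑ f : Fin n → Finset (Fin B),
          if L ∩ Finset.univ.biUnion f = ∅ then ∏ u, wnu B (f u) else 0)
      = Real.exp (-(((B : ℝ) + 1) * ρ)) *
          ((((B : ℝ) + 1) * ρ * (1 / ((l : ℝ) + 1))) ^ n / n.factorial) := by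
    intro n
    rw [inner_eq B l n hlB L hL]
    simp only [mul_pow]
    ring
  rw [tsum_congr hterm, tsum_mul_left]
  have hexp : (∑' n : ℕ, (((B : ℝ) + 1) * ρ * (1 / ((l : ℝ) + 1))) ^ n / n.factorial)
      = Real.exp (((B : ℝ) + 1) * ρ * (1 / ((l : ℝ) + 1))) := by
    rw [Real.exp_eq_exp_ℝ, NormedSpace.exp_eq_tsum_div]
  rw [hexp, ← Real.exp_add]
  congr 1
  field_simp
  ring
end

section
/- Fix an integer B ≥ 1, a block b ∈ {1,…,B}, and a real ρ ≥ 0. If S_1,…,S_n are independent draws from μ_B, then P(b ∉ S_1 ∪ ⋯ ∪ S_n) = ((B+1)/(2B))^n for every n ≥ 0, and consequently the Poisson mixture ∑_{n=0}^{∞} e^{−Bρ} (Bρ)^n / n! · ((B+1)/(2B))^n equals exp(−ρ(B−1)/2). That is, the steady-state probability q_∞ that a tagged block is unavailable among the leechers equals exp(−ρ(B−1)/2). -/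
lemma gauss_nat (B : ℕ) : (∑ m ∈ Finset.range B, (B - m)) * 2 = B * (B + 1) := by
  have h1 : ∑ m ∈ Finset.range B, (B - m) = ∑ m ∈ Finset.range B, (m + 1) := by
    rw [← Finset.sum_range_reflect (fun m => B - m) B]
    refine Finset.sum_congr rfl fun m hm => ?_
    rw [Finset.mem_range] at hm
    omega
  have h2 : ∑ m ∈ Finset.range B, (m + 1) = ∑ m ∈ Finset.range (B + 1), m := by
    rw [Finset.sum_range_succ' (fun m => m) B]
    simp
  rw [h1, h2, Finset.sum_range_id_mul_two]
  simp [Nat.mul_comm]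

lemma choose_key {B m : ℕ} (hm : m < B) :
    B.choose m * (B - m) = B * ((B - 1).choose m) := by
  obtain ⟨n, rfl⟩ : ∃ n, B = n + 1 := ⟨B - 1, by omega⟩
  have h1 := Nat.choose_succ_right_eq (n + 1) m
  have h2 := Nat.add_one_mul_choose_eq n m
  have h3 : n + 1 - 1 = n := by omega
  rw [h3]
  omega

lemma single_sum (B : ℕ) (hB : 1 ≤ B) (b : Fin B) :
    (∑ s : Finset (Fin B), if b ∉ s then wmu B s else 0)
      = ((B : ℝ) + 1) / (2 * (B : ℝ)) := by
  have hB0 : (B : ℝ) ≠ 0 := by positivity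
  classical
  have hstep : (∑ s : Finset (Fin B), if b ∉ s then wmu B s else 0)
      = ∑ s ∈ (Finset.univ.erase b).powerset, wmu B s := by
    rw [← Finset.sum_filter]
    refine Finset.sum_congr ?_ fun _ _ => rfl
    ext s
    simp [Finset.subset_erase]
  rw [hstep]
  have hcard : (Finset.univ.erase b).card = B - 1 := by
    rw [Finset.card_erase_of_mem (Finset.mem_univ b)]
    simp
  have hwmu : ∀ s ∈ (Finset.univ.erase b).powerset, wmu B s =
      (fun k => if k < B then 1 / ((B : ℝ) * (B.choose k)) else 0) s.card :=
    fun s _ => rfl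
  rw [Finset.sum_congr rfl hwmu,
    Finset.sum_powerset_apply_card (fun k => if k < B then 1 / ((B : ℝ) * (B.choose k)) else 0),
    hcard]
  have hr : B - 1 + 1 = B := by omega
  rw [hr]
  have hterm : ∀ m ∈ Finset.range B,
      ((B - 1).choose m) • (if m < B then 1 / ((B : ℝ) * (B.choose m)) else 0)
        = ((B : ℝ) - m) / ((B : ℝ) * B) := by
    intro m hm
    rw [Finset.mem_range] at hm
    rw [if_pos hm, nsmul_eq_mul]
    have hkey := choose_key hm
    have hch0 : (B.choose m : ℝ) ≠ 0 := by
      exact_mod_cast (Nat.choose_pos hm.le).ne'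
    have hcast : ((B - m : ℕ) : ℝ) = (B : ℝ) - m := by
      push_cast [Nat.cast_sub hm.le]; ring
    have hkeyR : (B.choose m : ℝ) * ((B : ℝ) - m) = (B : ℝ) * ((B - 1).choose m : ℝ) := by
      rw [← hcast]; exact_mod_cast hkey
    field_simp
    linear_combination (-1 : ℝ) * hkeyR
  rw [Finset.sum_congr rfl hterm, ← Finset.sum_div]
  have hg : (∑ m ∈ Finset.range B, ((B : ℝ) - m)) * 2 = (B : ℝ) * (B + 1) := by
    have hc : ∀ m ∈ Finset.range B, ((B : ℝ) - m) = ((B - m : ℕ) : ℝ) := by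
      intro m hm
      rw [Finset.mem_range] at hm
      push_cast [Nat.cast_sub hm.le]; ring
    rw [Finset.sum_congr rfl hc, ← Nat.cast_sum]
    exact_mod_cast gauss_nat B
  have hsum : (∑ m ∈ Finset.range B, ((B : ℝ) - m)) = (B : ℝ) * (B + 1) / 2 := by
    linarith
  rw [hsum]
  field_simp

/-- for `B ≥ 1`, a tagged block `b`, and `ρ ≥ 0`: for every `n ≥ 0`,
the probability that `b` is owned by none of `n` independent leechers is
`((B+1)/(2B))^n`, and consequently the Poisson mixture (with mean `Bρ`)
`∑_{n} e^{-Bρ} (Bρ)^n/n! ((B+1)/(2B))^n` equals `exp(-ρ(B-1)/2)`; that is,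
`q_∞ = exp(-ρ(B-1)/2)`. -/
theorem stmt13 (B : ℕ) (hB : 1 ≤ B) (b : Fin B) (ρ : ℝ) (hρ : 0 ≤ ρ) :
    (∀ n : ℕ,
      (∑ f : Fin n → Finset (Fin B),
        if b ∉ Finset.univ.biUnion f then ∏ u, wmu B (f u) else 0)
        = (((B : ℝ) + 1) / (2 * (B : ℝ))) ^ n) ∧
    (∑' n : ℕ, Real.exp (-((B : ℝ) * ρ)) * ((B : ℝ) * ρ) ^ n / n.factorial *
        (((B : ℝ) + 1) / (2 * (B : ℝ))) ^ n)
      = Real.exp (-(ρ * ((B : ℝ) - 1) / 2)) := by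
  classical
  have hB0 : (B : ℝ) ≠ 0 := by positivity
  constructor
  · intro n
    have hfac : ∀ f : Fin n → Finset (Fin B),
        (if b ∉ Finset.univ.biUnion f then ∏ u, wmu B (f u) else 0)
          = ∏ u, (if b ∉ f u then wmu B (f u) else 0) := by
      intro f
      by_cases h : b ∈ Finset.univ.biUnion f
      · rw [if_neg (not_not_intro h)]
        rw [Finset.mem_biUnion] at h
        obtain ⟨u, -, hu⟩ := h
        refine (Finset.prod_eq_zero (Finset.mem_univ u) ?_).symm
        simp [hu]
      · rw [if_pos h]
        rw [Finset.mem_biUnion] at h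
        push_neg at h
        exact Finset.prod_congr rfl fun u _ => (if_pos (h u (Finset.mem_univ u))).symm
    rw [Finset.sum_congr rfl fun f _ => hfac f, ← single_sum B hB b]
    rw [Finset.sum_pow' Finset.univ (fun s => if b ∉ s then wmu B s else 0) n]
    rw [Fintype.piFinset_univ]
  · have hterm : ∀ n : ℕ,
        Real.exp (-((B : ℝ) * ρ)) * ((B : ℝ) * ρ) ^ n / n.factorial *
          (((B : ℝ) + 1) / (2 * (B : ℝ))) ^ n
        = Real.exp (-((B : ℝ) * ρ)) *
          (((n.factorial : ℝ))⁻¹ • ((B : ℝ) * ρ * (((B : ℝ) + 1) / (2 * (B : ℝ)))) ^ n) := by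
      intro n
      rw [smul_eq_mul, mul_pow ((B : ℝ) * ρ) (((B : ℝ) + 1) / (2 * (B : ℝ))) n]
      ring
    rw [tsum_congr hterm, tsum_mul_left]
    have hexp : (∑' n : ℕ, ((n.factorial : ℝ))⁻¹ •
        ((B : ℝ) * ρ * (((B : ℝ) + 1) / (2 * (B : ℝ)))) ^ n)
        = Real.exp ((B : ℝ) * ρ * (((B : ℝ) + 1) / (2 * (B : ℝ)))) := by
      rw [Real.exp_eq_exp_ℝ, NormedSpace.exp_eq_tsum (𝕂 := ℝ)]
    rw [hexp, ← Real.exp_add]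
    congr 1
    field_simp
    ring
end

section
/- Fix an integer B ≥ 1 and a real ρ ≥ 0. If S_1,…,S_n are independent draws from ν_B and V_n = |S_1 ∪ ⋯ ∪ S_n|, then E[B − V_n] = B·2^{−n} for every n ≥ 0, and consequently the Poisson mixture ∑_{n=0}^{∞} e^{−(B+1)ρ} ((B+1)ρ)^n / n! · E[B − V_n] equals B·exp(−ρ(B+1)/2). That is, the steady-state mean number of blocks available among the peers is E[V] = B(1 − exp(−ρ(B+1)/2)). -/
theorem wnu_sum (B : ℕ) : ∑ s : Finset (Fin B), wnu B s = 1 := by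
  have h : (Finset.univ : Finset (Finset (Fin B))) = (Finset.univ : Finset (Fin B)).powerset := by
    simp
  rw [h]
  unfold wnu
  rw [Finset.sum_powerset_apply_card (fun k => 1 / ((B+1) * (B.choose k) : ℝ))]
  simp only [Finset.card_univ, Fintype.card_fin]
  have step : ∀ k ∈ Finset.range (B+1),
      (B.choose k) • ((1:ℝ) / ((B+1) * (B.choose k))) = 1/(B+1) := by
    intro k hk
    have hk' : k ≤ B := Nat.lt_succ_iff.mp (Finset.mem_range.mp hk)
    have hc : (0:ℝ) < B.choose k := by exact_mod_cast Nat.choose_pos hk'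
    rw [nsmul_eq_mul]
    field_simp
  rw [Finset.sum_congr rfl step, Finset.sum_const, Finset.card_range, nsmul_eq_mul]
  have : ((B:ℝ)+1) ≠ 0 := by positivity
  push_cast
  field_simp

theorem wnu_compl (B : ℕ) (s : Finset (Fin B)) : wnu B sᶜ = wnu B s := by
  unfold wnu
  rw [Finset.card_compl, Fintype.card_fin, Nat.choose_symm]
  exact (Finset.card_le_univ s).trans_eq (by simp)

theorem wnu_half (B : ℕ) (i : Fin B) :
    ∑ s : Finset (Fin B), wnu B s * (if i ∈ s then 0 else 1) = 1/2 := by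
  have hbij : ∑ s : Finset (Fin B), wnu B s * (if i ∈ s then (0:ℝ) else 1)
      = ∑ s : Finset (Fin B), wnu B s * (if i ∈ s then (1:ℝ) else 0) := by
    rw [← Function.Bijective.sum_comp (compl_involutive.bijective)
      (fun s => wnu B s * (if i ∈ s then (0:ℝ) else 1))]
    refine Finset.sum_congr rfl fun s _ => ?_
    rw [wnu_compl]
    simp [Finset.mem_compl]
  have hsum : (∑ s : Finset (Fin B), wnu B s * (if i ∈ s then (0:ℝ) else 1))
      + (∑ s : Finset (Fin B), wnu B s * (if i ∈ s then (1:ℝ) else 0)) = 1 := by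
    rw [← Finset.sum_add_distrib]
    rw [Finset.sum_congr rfl (fun s _ => ?_), wnu_sum B]
    by_cases h : i ∈ s <;> simp [h]
  rw [← hbij] at hsum
  linarith

theorem sum_prod_pow {n B : ℕ} (g : Finset (Fin B) → ℝ) :
    ∑ f : Fin n → Finset (Fin B), ∏ u, g (f u) = (∑ s : Finset (Fin B), g s) ^ n := by
  symm
  calc (∑ s : Finset (Fin B), g s) ^ n = ∏ _u : Fin n, ∑ s : Finset (Fin B), g s := by
        rw [Finset.prod_const, Finset.card_univ, Fintype.card_fin]
    _ = _ := by rw [Finset.prod_univ_sum, Fintype.piFinset_univ]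

theorem part1 (B : ℕ) (n : ℕ) :
    (∑ f : Fin n → Finset (Fin B),
        (∏ u, wnu B (f u)) * ((B : ℝ) - (Finset.univ.biUnion f).card))
      = (B : ℝ) / 2 ^ n := by
  have hcard : ∀ t : Finset (Fin B),
      (B : ℝ) - t.card = ∑ i : Fin B, (if i ∈ t then (0:ℝ) else 1) := by
    intro t
    have : ∀ i : Fin B, (if i ∈ t then (0:ℝ) else 1) = 1 - (if i ∈ t then (1:ℝ) else 0) := by
      intro i; by_cases h : i ∈ t <;> simp [h]
    simp only [this, Finset.sum_sub_distrib, Finset.sum_const, Finset.card_univ,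
      Fintype.card_fin, Finset.sum_boole, nsmul_eq_mul, mul_one]
    congr 1
    simp [Finset.filter_mem_eq_inter]
  have hind : ∀ (f : Fin n → Finset (Fin B)) (i : Fin B),
      (if i ∈ Finset.univ.biUnion f then (0:ℝ) else 1)
        = ∏ u, (if i ∈ f u then (0:ℝ) else 1) := by
    intro f i
    by_cases h : i ∈ Finset.univ.biUnion f
    · obtain ⟨u, _, hu⟩ := Finset.mem_biUnion.mp h
      rw [if_pos h, eq_comm]
      exact Finset.prod_eq_zero (Finset.mem_univ u) (if_pos hu)
    · rw [if_neg h, eq_comm]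
      refine Finset.prod_eq_one fun u _ => if_neg fun hu => h ?_
      exact Finset.mem_biUnion.mpr ⟨u, Finset.mem_univ u, hu⟩
  calc ∑ f : Fin n → Finset (Fin B),
        (∏ u, wnu B (f u)) * ((B : ℝ) - (Finset.univ.biUnion f).card)
      = ∑ f : Fin n → Finset (Fin B), ∑ i : Fin B,
          ∏ u, (wnu B (f u) * (if i ∈ f u then (0:ℝ) else 1)) := by
        refine Finset.sum_congr rfl fun f _ => ?_
        rw [hcard, Finset.mul_sum]
        refine Finset.sum_congr rfl fun i _ => ?_
        rw [hind, ← Finset.prod_mul_distrib]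
    _ = ∑ i : Fin B, ∑ f : Fin n → Finset (Fin B),
          ∏ u, (wnu B (f u) * (if i ∈ f u then (0:ℝ) else 1)) := Finset.sum_comm
    _ = ∑ i : Fin B, ((1:ℝ)/2) ^ n := by
        refine Finset.sum_congr rfl fun i _ => ?_
        rw [sum_prod_pow (fun s => wnu B s * (if i ∈ s then (0:ℝ) else 1)), wnu_half]
    _ = (B : ℝ) / 2 ^ n := by
        rw [Finset.sum_const, Finset.card_univ, Fintype.card_fin, nsmul_eq_mul, div_pow,
          one_pow]
        ring

theorem exp_tsum (x : ℝ) : ∑' n : ℕ, x ^ n / n.factorial = Real.exp x := by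
  rw [Real.exp_eq_exp_ℝ, NormedSpace.exp_eq_tsum_div]

theorem part2 (B : ℕ) (ρ : ℝ) :
    (∑' n : ℕ, Real.exp (-(((B : ℝ) + 1) * ρ)) * (((B : ℝ) + 1) * ρ) ^ n / n.factorial *
        ((B : ℝ) / 2 ^ n))
      = (B : ℝ) * Real.exp (-(ρ * ((B : ℝ) + 1) / 2)) := by
  set c : ℝ := ((B : ℝ) + 1) * ρ with hc
  have h1 : ∀ n : ℕ, Real.exp (-c) * c ^ n / n.factorial * ((B : ℝ) / 2 ^ n)
      = ((B : ℝ) * Real.exp (-c)) * ((c / 2) ^ n / n.factorial) := by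
    intro n
    rw [div_pow]
    have h2 : (0:ℝ) < (n.factorial : ℝ) := by exact_mod_cast n.factorial_pos
    field_simp
  rw [tsum_congr h1, tsum_mul_left, exp_tsum, mul_assoc, ← Real.exp_add]
  congr 2
  rw [hc]; ring

theorem part2' (B : ℕ) (ρ : ℝ) :
    (∑' n : ℕ, Real.exp (-(((B : ℝ) + 1) * ρ)) * (((B : ℝ) + 1) * ρ) ^ n / n.factorial *
        (B : ℝ))
      = (B : ℝ) := by
  set c : ℝ := ((B : ℝ) + 1) * ρ with hc
  have h1 : ∀ n : ℕ, Real.exp (-c) * c ^ n / n.factorial * (B : ℝ)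
      = ((B : ℝ) * Real.exp (-c)) * (c ^ n / n.factorial) := by
    intro n; ring
  rw [tsum_congr h1, tsum_mul_left, exp_tsum, mul_assoc, ← Real.exp_add]
  simp

/-- for `B ≥ 1` and `ρ ≥ 0`: with `Vₙ = |S₁ ∪ ⋯ ∪ Sₙ|` the number of
blocks held by `n` independent peers, `E[B - Vₙ] = B 2^{-n}` for every `n ≥ 0`;
consequently the Poisson mixture (mean `(B+1)ρ`) of `E[B - Vₙ]` equals
`B exp(-ρ(B+1)/2)`; that is, the steady-state mean number of available blocks is
`E[V] = B(1 - exp(-ρ(B+1)/2))`. -/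
theorem stmt14 (B : ℕ) (hB : 1 ≤ B) (ρ : ℝ) (hρ : 0 ≤ ρ) :
    (∀ n : ℕ,
      (∑ f : Fin n → Finset (Fin B),
        (∏ u, wnu B (f u)) * ((B : ℝ) - (Finset.univ.biUnion f).card))
        = (B : ℝ) / 2 ^ n) ∧
    (∑' n : ℕ, Real.exp (-(((B : ℝ) + 1) * ρ)) * (((B : ℝ) + 1) * ρ) ^ n / n.factorial *
        ((B : ℝ) / 2 ^ n))
      = (B : ℝ) * Real.exp (-(ρ * ((B : ℝ) + 1) / 2)) ∧
    (∑' n : ℕ, Real.exp (-(((B : ℝ) + 1) * ρ)) * (((B : ℝ) + 1) * ρ) ^ n / n.factorial *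
        (∑ f : Fin n → Finset (Fin B),
          (∏ u, wnu B (f u)) * ((Finset.univ.biUnion f).card : ℝ)))
      = (B : ℝ) * (1 - Real.exp (-(ρ * ((B : ℝ) + 1) / 2))) := by
  refine ⟨part1 B, part2 B ρ, ?_⟩
  set c : ℝ := ((B : ℝ) + 1) * ρ with hc
  have hone : ∀ n : ℕ, (∑ f : Fin n → Finset (Fin B), ∏ u, wnu B (f u)) = 1 := by
    intro n
    rw [sum_prod_pow (wnu B), wnu_sum, one_pow]
  have hinner : ∀ n : ℕ,
      (∑ f : Fin n → Finset (Fin B),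
        (∏ u, wnu B (f u)) * ((Finset.univ.biUnion f).card : ℝ))
      = (B : ℝ) - (B : ℝ) / 2 ^ n := by
    intro n
    have hsplit : ∀ f : Fin n → Finset (Fin B),
        (∏ u, wnu B (f u)) * ((Finset.univ.biUnion f).card : ℝ)
        = (∏ u, wnu B (f u)) * (B : ℝ)
          - (∏ u, wnu B (f u)) * ((B : ℝ) - (Finset.univ.biUnion f).card) := by
      intro f; ring
    rw [Finset.sum_congr rfl (fun f _ => hsplit f), Finset.sum_sub_distrib, part1,
      ← Finset.sum_mul, hone, one_mul]
  have hterm : ∀ n : ℕ,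
      Real.exp (-c) * c ^ n / n.factorial
          * (∑ f : Fin n → Finset (Fin B),
              (∏ u, wnu B (f u)) * ((Finset.univ.biUnion f).card : ℝ))
      = Real.exp (-c) * c ^ n / n.factorial * (B : ℝ)
        - Real.exp (-c) * c ^ n / n.factorial * ((B : ℝ) / 2 ^ n) := by
    intro n
    rw [hinner]; ring
  have hs1 : Summable (fun n : ℕ => Real.exp (-c) * c ^ n / n.factorial * (B : ℝ)) := by
    refine Summable.congr (((Real.summable_pow_div_factorial c).mul_left
      ((B : ℝ) * Real.exp (-c)))) fun n => ?_
    ring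
  have hs2 : Summable (fun n : ℕ => Real.exp (-c) * c ^ n / n.factorial * ((B : ℝ) / 2 ^ n)) := by
    refine Summable.congr (((Real.summable_pow_div_factorial (c / 2)).mul_left
      ((B : ℝ) * Real.exp (-c)))) fun n => ?_
    rw [div_pow]
    have h2 : (0:ℝ) < (n.factorial : ℝ) := by exact_mod_cast n.factorial_pos
    field_simp
  rw [tsum_congr hterm, Summable.tsum_sub hs1 hs2, part2' B ρ, part2 B ρ]
  ring
end
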